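/- The solution operator F ↦ φ^F, assigning to each F ∈ Lip(X,Y) the unique Lipschitzian solution φ^F of φ(x) = ∫_Ω g(ω) φ(f(x,ω)) μ(dω) + F(x), is a linear bijection of Lip(X,Y) onto itself and satisfies ‖φ^F‖_Lip ≤ c/|1 − γ| · ‖F‖_Lip, where c = max{1, c₀} and c₀ = (1 − λ)^{−1}( ∫_Ω |g(ω)| ρ(f(x₀,ω), x₀) μ(dω) + 1 + |γ| ); in particular it is a homeomorphism of (Lip(X,Y), ‖·‖_Lip) onto itself. -/

import Mathlib

open MeasureTheory

/-- The smallest Lipschitz constant of a function. -/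
noncomputable def lipConst {X : Type*} [MetricSpace X] {Y : Type*}
    [NormedAddCommGroup Y] (u : X → Y) : ℝ :=
  sInf {K : ℝ | 0 ≤ K ∧ ∀ x z, ‖u x - u z‖ ≤ K * dist x z}

lemma lipConst_nonneg {X : Type*} [MetricSpace X] {Y : Type*}
    [NormedAddCommGroup Y] (u : X → Y) : 0 ≤ lipConst u :=
  Real.sInf_nonneg (fun _ hK => hK.1)

lemma lipConst_le {X : Type*} [MetricSpace X] {Y : Type*}
    [NormedAddCommGroup Y] {u : X → Y} {K : ℝ} (hK : 0 ≤ K)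
    (h : ∀ x z, ‖u x - u z‖ ≤ K * dist x z) : lipConst u ≤ K :=
  csInf_le ⟨0, fun _ hk => hk.1⟩ ⟨hK, h⟩

lemma lipConst_mem {X : Type*} [MetricSpace X] {Y : Type*}
    [NormedAddCommGroup Y] {u : X → Y} {K : NNReal} (h : LipschitzWith K u) :
    ∀ x z, ‖u x - u z‖ ≤ lipConst u * dist x z := by
  intro x z
  rcases eq_or_ne x z with rfl | hxz
  · simp
  · have hd : 0 < dist x z := dist_pos.2 hxz
    rw [← div_le_iff₀ hd]
    refine le_csInf ⟨(K : ℝ), K.coe_nonneg, fun a b => by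
      have := h.dist_le_mul a b; rwa [dist_eq_norm] at this⟩ ?_
    intro b hb
    rw [div_le_iff₀ hd]
    exact hb.2 x z

lemma solzero {Ω : Type*} [MeasurableSpace Ω] (μ : Measure Ω)
    {X : Type*} [MetricSpace X]
    {𝕂 : Type*} [RCLike 𝕂]
    {Y : Type*} [NormedAddCommGroup Y] [NormedSpace 𝕂 Y] [NormedSpace ℝ Y] [CompleteSpace Y]
    (f : X → Ω → X) (g : Ω → 𝕂)
    (lam : ℝ) (hlam0 : 0 ≤ lam) (hlam1 : lam < 1)
    (hcontr : ∀ x z : X, (∫ ω, ‖g ω‖ * dist (f x ω) (f z ω) ∂μ) ≤ lam * dist x z)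
    (hdint : ∀ x z : X, Integrable (fun ω => ‖g ω‖ * dist (f x ω) (f z ω)) μ)
    (γ : 𝕂) (hγ : γ = ∫ ω, g ω ∂μ) (hγ1 : γ ≠ 1)
    (h : X → Y) (K : NNReal) (hK : LipschitzWith K h)
    (hint2 : ∀ x, Integrable (fun ω => g ω • h (f x ω)) μ)
    (heq : ∀ x, h x = ∫ ω, g ω • h (f x ω) ∂μ) : ∀ x, h x = 0 := by
  have key : ∀ n : ℕ, ∀ x z : X, ‖h x - h z‖ ≤ (K : ℝ) * lam ^ n * dist x z := by
    intro n
    induction n with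
    | zero =>
      intro x z
      have := hK.dist_le_mul x z
      rw [dist_eq_norm] at this
      simpa using this
    | succ n ih =>
      intro x z
      have e : h x - h z = ∫ ω, g ω • (h (f x ω) - h (f z ω)) ∂μ := by
        rw [heq x, heq z, ← integral_sub (hint2 x) (hint2 z)]
        simp [smul_sub]
      have hbint : Integrable (fun ω => ((K : ℝ) * lam ^ n) * (‖g ω‖ * dist (f x ω) (f z ω))) μ :=
        (hdint x z).const_mul _
      have hb : ‖∫ ω, g ω • (h (f x ω) - h (f z ω)) ∂μ‖ ≤
          ∫ ω, ((K : ℝ) * lam ^ n) * (‖g ω‖ * dist (f x ω) (f z ω)) ∂μ := by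
        refine norm_integral_le_of_norm_le hbint ?_
        filter_upwards with ω
        rw [norm_smul]
        calc ‖g ω‖ * ‖h (f x ω) - h (f z ω)‖
            ≤ ‖g ω‖ * ((K : ℝ) * lam ^ n * dist (f x ω) (f z ω)) :=
              mul_le_mul_of_nonneg_left (ih _ _) (norm_nonneg _)
          _ = ((K : ℝ) * lam ^ n) * (‖g ω‖ * dist (f x ω) (f z ω)) := by ring
      rw [e]
      calc ‖∫ ω, g ω • (h (f x ω) - h (f z ω)) ∂μ‖
          ≤ ∫ ω, ((K : ℝ) * lam ^ n) * (‖g ω‖ * dist (f x ω) (f z ω)) ∂μ := hb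
        _ = ((K : ℝ) * lam ^ n) * ∫ ω, ‖g ω‖ * dist (f x ω) (f z ω) ∂μ := by
            rw [MeasureTheory.integral_const_mul]
        _ ≤ ((K : ℝ) * lam ^ n) * (lam * dist x z) :=
            mul_le_mul_of_nonneg_left (hcontr x z) (by positivity)
        _ = (K : ℝ) * lam ^ (n + 1) * dist x z := by ring
  have hconst : ∀ x z : X, h x = h z := by
    intro x z
    have hle : ‖h x - h z‖ ≤ 0 := by
      have htend : Filter.Tendsto (fun n : ℕ => (K : ℝ) * lam ^ n * dist x z)
          Filter.atTop (nhds 0) := by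
        have h0 : Filter.Tendsto (fun n : ℕ => lam ^ n) Filter.atTop (nhds 0) :=
          tendsto_pow_atTop_nhds_zero_of_lt_one hlam0 hlam1
        have := (h0.const_mul (K : ℝ)).mul_const (dist x z)
        simpa using this
      exact ge_of_tendsto' htend (fun n => key n x z)
    rw [← sub_eq_zero]
    exact norm_le_zero_iff.1 hle
  intro x
  have hv : h x = γ • h x := by
    calc h x = ∫ ω, g ω • h (f x ω) ∂μ := heq x
      _ = ∫ ω, g ω • h x ∂μ := by
          congr 1; funext ω; rw [hconst (f x ω) x]
      _ = (∫ ω, g ω ∂μ) • h x := integral_smul_const g (h x)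
      _ = γ • h x := by rw [hγ]
  have h1γ : (1 : 𝕂) - γ ≠ 0 := sub_ne_zero.2 (Ne.symm hγ1)
  have hz : (1 - γ) • h x = 0 := by
    rw [sub_smul, one_smul, ← hv, sub_self]
  calc h x = (1 - γ)⁻¹ • ((1 - γ) • h x) := (inv_smul_smul₀ h1γ _).symm
    _ = 0 := by rw [hz, smul_zero]

/-- Theorem 4.1(i): the solution operator F ↦ φ^F is a linear bijection of
Lip(X,Y) onto itself with ‖φ^F‖_Lip ≤ c/|1−γ| ‖F‖_Lip; in particular it is a
homeomorphism of (Lip(X,Y), ‖·‖_Lip) onto itself. -/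
theorem stmt_12 {Ω : Type*} [MeasurableSpace Ω] (μ : MeasureTheory.Measure Ω)
    {X : Type*} [MetricSpace X] [TopologicalSpace.SeparableSpace X]
    [MeasurableSpace X] [BorelSpace X]
    {𝕂 : Type*} [RCLike 𝕂]
    {Y : Type*} [NormedAddCommGroup Y] [NormedSpace 𝕂 Y] [NormedSpace ℝ Y] [CompleteSpace Y]
    (f : X → Ω → X) (g : Ω → 𝕂)
    (hf : ∀ x, Measurable (f x))
    (hg : Integrable g μ)
    (hint : ∀ x, Integrable (fun ω => ‖g ω‖ * dist (f x ω) x) μ)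
    (lam : ℝ) (hlam : lam ∈ Set.Ico (0 : ℝ) 1)
    (hcontr : ∀ x z : X, (∫ ω, ‖g ω‖ * dist (f x ω) (f z ω) ∂μ) ≤ lam * dist x z)
    (γ : 𝕂) (hγ : γ = ∫ ω, g ω ∂μ) (hγ1 : γ ≠ 1)
    (x₀ : X)
    (c₀ c : ℝ)
    (hc₀ : c₀ = (1 - lam)⁻¹ * ((∫ ω, ‖g ω‖ * dist (f x₀ ω) x₀ ∂μ) + 1 + ‖γ‖))
    (hc : c = max 1 c₀)
    (T : (X → Y) → X → Y)
    (hT : ∀ F : X → Y, (∃ K : NNReal, LipschitzWith K F) →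
      ((∃ K : NNReal, LipschitzWith K (T F)) ∧
        ∀ x, Integrable (fun ω => g ω • T F (f x ω)) μ ∧
          T F x = (∫ ω, g ω • T F (f x ω) ∂μ) + F x)) :
    (∀ F G : X → Y, (∃ K : NNReal, LipschitzWith K F) → (∃ K : NNReal, LipschitzWith K G) →
      T (F + G) = T F + T G) ∧
    (∀ (a : 𝕂) (F : X → Y), (∃ K : NNReal, LipschitzWith K F) → T (a • F) = a • T F) ∧
    (∀ F G : X → Y, (∃ K : NNReal, LipschitzWith K F) → (∃ K : NNReal, LipschitzWith K G) →
      T F = T G → F = G) ∧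
    (∀ ψ : X → Y, (∃ K : NNReal, LipschitzWith K ψ) →
      ∃ F : X → Y, (∃ K : NNReal, LipschitzWith K F) ∧ T F = ψ) ∧
    (∀ F : X → Y, (∃ K : NNReal, LipschitzWith K F) →
      ‖T F x₀‖ + lipConst (T F) ≤ c / ‖1 - γ‖ * (‖F x₀‖ + lipConst F)) := by
  obtain ⟨hlam0, hlam1⟩ := hlam
  have hSC : SecondCountableTopology X := UniformSpace.secondCountable_of_separable X
  -- integrability of the distance integrand for two points
  have hdint : ∀ x z : X, Integrable (fun ω => ‖g ω‖ * dist (f x ω) (f z ω)) μ := by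
    intro x z
    have hmeas : AEStronglyMeasurable (fun ω => ‖g ω‖ * dist (f x ω) (f z ω)) μ :=
      hg.norm.aestronglyMeasurable.mul (((hf x).dist (hf z)).aestronglyMeasurable)
    refine Integrable.mono'
      (((hint x).add ((hg.norm).mul_const (dist x z))).add (hint z)) hmeas ?_
    filter_upwards with ω
    have htri : dist (f x ω) (f z ω) ≤ dist (f x ω) x + dist x z + dist (f z ω) z := by
      have := dist_triangle4 (f x ω) x z (f z ω)
      rwa [dist_comm z (f z ω)] at this
    have h0 : (0:ℝ) ≤ ‖g ω‖ * dist (f x ω) (f z ω) := by positivity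
    rw [Real.norm_eq_abs, abs_of_nonneg h0]
    calc ‖g ω‖ * dist (f x ω) (f z ω)
        ≤ ‖g ω‖ * (dist (f x ω) x + dist x z + dist (f z ω) z) :=
          mul_le_mul_of_nonneg_left htri (norm_nonneg _)
      _ = ‖g ω‖ * dist (f x ω) x + ‖g ω‖ * dist x z + ‖g ω‖ * dist (f z ω) z := by ring
  -- integrability of g • ψ ∘ f for Lipschitz ψ
  have hLipInt : ∀ (ψ : X → Y), (∃ K : NNReal, LipschitzWith K ψ) →
      ∀ x, Integrable (fun ω => g ω • ψ (f x ω)) μ := by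
    rintro ψ ⟨K, hK⟩ x
    have hmeas : AEStronglyMeasurable (fun ω => g ω • ψ (f x ω)) μ :=
      hg.aestronglyMeasurable.smul
        (hK.continuous.comp_stronglyMeasurable (hf x).stronglyMeasurable).aestronglyMeasurable
    refine Integrable.mono'
      (((hint x).const_mul (K : ℝ)).add ((hg.norm).mul_const ‖ψ x‖)) hmeas ?_
    filter_upwards with ω
    rw [norm_smul]
    have h1 : ‖ψ (f x ω) - ψ x‖ ≤ (K : ℝ) * dist (f x ω) x := by
      have := hK.dist_le_mul (f x ω) x
      rwa [dist_eq_norm] at this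
    have h2 : ‖ψ (f x ω)‖ ≤ (K : ℝ) * dist (f x ω) x + ‖ψ x‖ := by
      have := norm_sub_norm_le (ψ (f x ω)) (ψ x)
      linarith
    calc ‖g ω‖ * ‖ψ (f x ω)‖
        ≤ ‖g ω‖ * ((K : ℝ) * dist (f x ω) x + ‖ψ x‖) :=
          mul_le_mul_of_nonneg_left h2 (norm_nonneg _)
      _ = (K : ℝ) * (‖g ω‖ * dist (f x ω) x) + ‖g ω‖ * ‖ψ x‖ := by ring
  -- the zero lemma
  have hzero : ∀ h : X → Y, (∃ K : NNReal, LipschitzWith K h) →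
      (∀ x, Integrable (fun ω => g ω • h (f x ω)) μ) →
      (∀ x, h x = ∫ ω, g ω • h (f x ω) ∂μ) → ∀ x, h x = 0 := by
    rintro h ⟨K, hK⟩ hi he
    exact solzero μ f g lam hlam0 hlam1 hcontr hdint γ hγ hγ1 h K hK hi he
  -- uniqueness of Lipschitz solutions
  have huniq : ∀ (F φ ψ : X → Y), (∃ K : NNReal, LipschitzWith K φ) →
      (∃ K : NNReal, LipschitzWith K ψ) →
      (∀ x, Integrable (fun ω => g ω • φ (f x ω)) μ) →
      (∀ x, Integrable (fun ω => g ω • ψ (f x ω)) μ) →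
      (∀ x, φ x = (∫ ω, g ω • φ (f x ω) ∂μ) + F x) →
      (∀ x, ψ x = (∫ ω, g ω • ψ (f x ω) ∂μ) + F x) → φ = ψ := by
    rintro F φ ψ ⟨K1, h1⟩ ⟨K2, h2⟩ hiφ hiψ heφ heψ
    have hz := hzero (fun x => φ x - ψ x) ⟨K1 + K2, h1.sub h2⟩ ?_ ?_
    · funext x
      have := hz x
      simpa [sub_eq_zero] using this
    · intro x
      have := (hiφ x).sub (hiψ x)
      exact this.congr (Filter.Eventually.of_forall fun ω => by simp [smul_sub])
    · intro x
      show φ x - ψ x = ∫ ω, g ω • (φ (f x ω) - ψ (f x ω)) ∂μ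
      have hsplit : (∫ ω, g ω • (φ (f x ω) - ψ (f x ω)) ∂μ)
          = (∫ ω, g ω • φ (f x ω) ∂μ) - ∫ ω, g ω • ψ (f x ω) ∂μ := by
        rw [← integral_sub (hiφ x) (hiψ x)]; simp [smul_sub]
      rw [hsplit, heφ x, heψ x]; abel
  -- Lipschitz of scalar multiples
  have hsmulLip : ∀ (a : 𝕂) (u : X → Y), (∃ K : NNReal, LipschitzWith K u) →
      ∃ K : NNReal, LipschitzWith K (a • u) := by
    rintro a u ⟨K, hK⟩
    refine ⟨‖a‖₊ * K, LipschitzWith.of_dist_le_mul fun x z => ?_⟩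
    simp only [Pi.smul_apply]
    rw [dist_smul₀]
    push_cast
    calc ‖a‖ * dist (u x) (u z) ≤ ‖a‖ * ((K : ℝ) * dist x z) :=
          mul_le_mul_of_nonneg_left (hK.dist_le_mul x z) (norm_nonneg a)
      _ = ‖a‖ * (K : ℝ) * dist x z := by ring
  refine ⟨?_, ?_, ?_, ?_, ?_⟩
  · -- additivity
    intro F G hF hG
    have hFG : ∃ K : NNReal, LipschitzWith K (F + G) := by
      obtain ⟨K1, h1⟩ := hF; obtain ⟨K2, h2⟩ := hG
      exact ⟨K1 + K2, h1.add h2⟩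
    obtain ⟨hLipFG, hFGe⟩ := hT (F + G) hFG
    obtain ⟨hLipF, hFe⟩ := hT F hF
    obtain ⟨hLipG, hGe⟩ := hT G hG
    have hLipSum : ∃ K : NNReal, LipschitzWith K (T F + T G) := by
      obtain ⟨K1, h1⟩ := hLipF; obtain ⟨K2, h2⟩ := hLipG
      exact ⟨K1 + K2, h1.add h2⟩
    refine huniq (F + G) (T (F + G)) (T F + T G) hLipFG hLipSum
      (fun x => (hFGe x).1) ?_ (fun x => (hFGe x).2) ?_
    · intro x
      have := (hFe x).1.add (hGe x).1
      exact this.congr (Filter.Eventually.of_forall fun ω => by simp [smul_add])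
    · intro x
      simp only [Pi.add_apply]
      rw [(hFe x).2, (hGe x).2]
      have e : (∫ ω, g ω • (T F (f x ω) + T G (f x ω)) ∂μ)
          = (∫ ω, g ω • T F (f x ω) ∂μ) + ∫ ω, g ω • T G (f x ω) ∂μ := by
        rw [← integral_add (hFe x).1 (hGe x).1]; simp [smul_add]
      rw [e]; abel
  · -- homogeneity
    intro a F hF
    have haF := hsmulLip a F hF
    obtain ⟨hLipaF, haFe⟩ := hT (a • F) haF
    obtain ⟨hLipTF, hFe⟩ := hT F hF
    refine huniq (a • F) (T (a • F)) (a • T F) hLipaF (hsmulLip a (T F) hLipTF)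
      (fun x => (haFe x).1) ?_ (fun x => (haFe x).2) ?_
    · intro x
      have := ((hFe x).1).smul a
      refine this.congr ?_
      filter_upwards with ω
      simp [smul_comm a (g ω)]
    · intro x
      simp only [Pi.smul_apply]
      rw [(hFe x).2, smul_add]
      congr 1
      rw [← integral_smul]
      congr 1; funext ω
      simp [smul_comm a (g ω)]
  · -- injectivity
    intro F G hF hG hTeq
    obtain ⟨_, hFe⟩ := hT F hF
    obtain ⟨_, hGe⟩ := hT G hG
    funext x
    have e1 := (hFe x).2
    rw [hTeq] at e1
    exact add_left_cancel (e1.symm.trans ((hGe x).2))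
  · -- surjectivity
    rintro ψ ⟨K, hK⟩
    have hψint : ∀ x, Integrable (fun ω => g ω • ψ (f x ω)) μ := hLipInt ψ ⟨K, hK⟩
    set F : X → Y := fun x => ψ x - ∫ ω, g ω • ψ (f x ω) ∂μ with hFdef
    have hFlip : ∃ K' : NNReal, LipschitzWith K' F := by
      refine ⟨⟨(K : ℝ) * (1 + lam), by positivity⟩, LipschitzWith.of_dist_le_mul fun x z => ?_⟩
      show dist (F x) (F z) ≤ (K : ℝ) * (1 + lam) * dist x z
      rw [dist_eq_norm]
      have hsplit : (∫ ω, g ω • (ψ (f x ω) - ψ (f z ω)) ∂μ)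
          = (∫ ω, g ω • ψ (f x ω) ∂μ) - ∫ ω, g ω • ψ (f z ω) ∂μ := by
        rw [← integral_sub (hψint x) (hψint z)]; simp [smul_sub]
      have e : F x - F z = (ψ x - ψ z) - ∫ ω, g ω • (ψ (f x ω) - ψ (f z ω)) ∂μ := by
        simp only [hFdef]
        rw [hsplit]
        abel
      rw [e]
      have h1 : ‖ψ x - ψ z‖ ≤ (K : ℝ) * dist x z := by
        have := hK.dist_le_mul x z; rwa [dist_eq_norm] at this
      have h2 : ‖∫ ω, g ω • (ψ (f x ω) - ψ (f z ω)) ∂μ‖ ≤ (K : ℝ) * (lam * dist x z) := by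
        calc ‖∫ ω, g ω • (ψ (f x ω) - ψ (f z ω)) ∂μ‖
            ≤ ∫ ω, (K : ℝ) * (‖g ω‖ * dist (f x ω) (f z ω)) ∂μ := by
              refine norm_integral_le_of_norm_le ((hdint x z).const_mul _) ?_
              filter_upwards with ω
              rw [norm_smul]
              have : ‖ψ (f x ω) - ψ (f z ω)‖ ≤ (K : ℝ) * dist (f x ω) (f z ω) := by
                have := hK.dist_le_mul (f x ω) (f z ω)
                rwa [dist_eq_norm] at this
              calc ‖g ω‖ * ‖ψ (f x ω) - ψ (f z ω)‖
                  ≤ ‖g ω‖ * ((K : ℝ) * dist (f x ω) (f z ω)) :=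
                    mul_le_mul_of_nonneg_left this (norm_nonneg _)
                _ = (K : ℝ) * (‖g ω‖ * dist (f x ω) (f z ω)) := by ring
          _ = (K : ℝ) * ∫ ω, ‖g ω‖ * dist (f x ω) (f z ω) ∂μ := by
              rw [MeasureTheory.integral_const_mul]
          _ ≤ (K : ℝ) * (lam * dist x z) :=
              mul_le_mul_of_nonneg_left (hcontr x z) K.coe_nonneg
      calc ‖(ψ x - ψ z) - ∫ ω, g ω • (ψ (f x ω) - ψ (f z ω)) ∂μ‖
          ≤ ‖ψ x - ψ z‖ + ‖∫ ω, g ω • (ψ (f x ω) - ψ (f z ω)) ∂μ‖ := norm_sub_le _ _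
        _ ≤ (K : ℝ) * dist x z + (K : ℝ) * (lam * dist x z) := add_le_add h1 h2
        _ = (K : ℝ) * (1 + lam) * dist x z := by ring
    refine ⟨F, hFlip, ?_⟩
    obtain ⟨hLipTF, hTFe⟩ := hT F hFlip
    refine huniq F (T F) ψ hLipTF ⟨K, hK⟩ (fun x => (hTFe x).1) hψint (fun x => (hTFe x).2) ?_
    intro x
    simp only [hFdef]
    abel
  · -- norm bound
    intro F hF
    obtain ⟨hLipTF, hTFe⟩ := hT F hF
    obtain ⟨KF, hKF⟩ := hF
    obtain ⟨Kφ, hKφ⟩ := hLipTF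
    set φ := T F with hφdef
    set L := lipConst φ with hLdef
    set LF := lipConst F with hLFdef
    have hLnon : 0 ≤ L := lipConst_nonneg _
    have hLFnon : 0 ≤ LF := lipConst_nonneg _
    have hφmem := lipConst_mem hKφ
    have hFmem := lipConst_mem hKF
    set I₀ := ∫ ω, ‖g ω‖ * dist (f x₀ ω) x₀ ∂μ with hI0def
    have hI₀ : 0 ≤ I₀ := integral_nonneg (fun ω => by positivity)
    -- Lipschitz estimate for φ
    have hLle : L ≤ lam * L + LF := by
      refine lipConst_le (add_nonneg (mul_nonneg hlam0 hLnon) hLFnon) ?_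
      intro x z
      rw [(hTFe x).2, (hTFe z).2]
      have hsplitxz : (∫ ω, g ω • (φ (f x ω) - φ (f z ω)) ∂μ)
          = (∫ ω, g ω • φ (f x ω) ∂μ) - ∫ ω, g ω • φ (f z ω) ∂μ := by
        rw [← integral_sub ((hTFe x).1) ((hTFe z).1)]; simp [smul_sub]
      have e : (∫ ω, g ω • φ (f x ω) ∂μ) + F x - ((∫ ω, g ω • φ (f z ω) ∂μ) + F z)
          = (∫ ω, g ω • (φ (f x ω) - φ (f z ω)) ∂μ) + (F x - F z) := by
        rw [hsplitxz]
        abel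
      rw [e]
      have hb : ‖∫ ω, g ω • (φ (f x ω) - φ (f z ω)) ∂μ‖ ≤ L * (lam * dist x z) := by
        calc ‖∫ ω, g ω • (φ (f x ω) - φ (f z ω)) ∂μ‖
            ≤ ∫ ω, L * (‖g ω‖ * dist (f x ω) (f z ω)) ∂μ := by
              refine norm_integral_le_of_norm_le ((hdint x z).const_mul _) ?_
              filter_upwards with ω
              rw [norm_smul]
              calc ‖g ω‖ * ‖φ (f x ω) - φ (f z ω)‖
                  ≤ ‖g ω‖ * (L * dist (f x ω) (f z ω)) :=
                    mul_le_mul_of_nonneg_left (hφmem _ _) (norm_nonneg _)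
                _ = L * (‖g ω‖ * dist (f x ω) (f z ω)) := by ring
          _ = L * ∫ ω, ‖g ω‖ * dist (f x ω) (f z ω) ∂μ := by
              rw [MeasureTheory.integral_const_mul]
          _ ≤ L * (lam * dist x z) := mul_le_mul_of_nonneg_left (hcontr x z) hLnon
      calc ‖(∫ ω, g ω • (φ (f x ω) - φ (f z ω)) ∂μ) + (F x - F z)‖
          ≤ ‖∫ ω, g ω • (φ (f x ω) - φ (f z ω)) ∂μ‖ + ‖F x - F z‖ := norm_add_le _ _
        _ ≤ L * (lam * dist x z) + LF * dist x z := add_le_add hb (hFmem x z)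
        _ = (lam * L + LF) * dist x z := by ring
    have hLle2 : L ≤ (1 - lam)⁻¹ * LF := by
      rw [inv_mul_eq_div, le_div_iff₀ (by linarith)]
      nlinarith
    -- value estimate at x₀
    have hsplit : (∫ ω, g ω • φ (f x₀ ω) ∂μ)
        = (∫ ω, g ω • (φ (f x₀ ω) - φ x₀) ∂μ) + γ • φ x₀ := by
      have e : (∫ ω, g ω • (φ (f x₀ ω) - φ x₀) ∂μ)
          = (∫ ω, g ω • φ (f x₀ ω) ∂μ) - ∫ ω, g ω • φ x₀ ∂μ := by
        rw [← integral_sub ((hTFe x₀).1) (hg.smul_const _)]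
        simp [smul_sub]
      rw [e, integral_smul_const, ← hγ]
      abel
    have heq0 : φ x₀ = ((∫ ω, g ω • (φ (f x₀ ω) - φ x₀) ∂μ) + γ • φ x₀) + F x₀ := by
      have := (hTFe x₀).2
      rwa [hsplit] at this
    have hval : ‖(1 - γ) • φ x₀‖ ≤ L * I₀ + ‖F x₀‖ := by
      have e2 : (1 - γ) • φ x₀ = (∫ ω, g ω • (φ (f x₀ ω) - φ x₀) ∂μ) + F x₀ := by
        rw [sub_smul, one_smul]
        nth_rewrite 1 [heq0]
        abel
      rw [e2]
      have hb : ‖∫ ω, g ω • (φ (f x₀ ω) - φ x₀) ∂μ‖ ≤ L * I₀ := by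
        calc ‖∫ ω, g ω • (φ (f x₀ ω) - φ x₀) ∂μ‖
            ≤ ∫ ω, L * (‖g ω‖ * dist (f x₀ ω) x₀) ∂μ := by
              refine norm_integral_le_of_norm_le ((hint x₀).const_mul _) ?_
              filter_upwards with ω
              rw [norm_smul]
              have h3 : ‖φ (f x₀ ω) - φ x₀‖ ≤ L * dist (f x₀ ω) x₀ := hφmem _ _
              calc ‖g ω‖ * ‖φ (f x₀ ω) - φ x₀‖
                  ≤ ‖g ω‖ * (L * dist (f x₀ ω) x₀) :=
                    mul_le_mul_of_nonneg_left h3 (norm_nonneg _)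
                _ = L * (‖g ω‖ * dist (f x₀ ω) x₀) := by ring
          _ = L * I₀ := by rw [MeasureTheory.integral_const_mul]
      calc ‖(∫ ω, g ω • (φ (f x₀ ω) - φ x₀) ∂μ) + F x₀‖
          ≤ ‖∫ ω, g ω • (φ (f x₀ ω) - φ x₀) ∂μ‖ + ‖F x₀‖ := norm_add_le _ _
        _ ≤ L * I₀ + ‖F x₀‖ := add_le_add hb le_rfl
    have hd : 0 < ‖(1 : 𝕂) - γ‖ := by
      rw [norm_pos_iff]
      exact sub_ne_zero.2 (Ne.symm hγ1)
    have hφx₀ : ‖φ x₀‖ * ‖(1 : 𝕂) - γ‖ ≤ L * I₀ + ‖F x₀‖ := by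
      calc ‖φ x₀‖ * ‖(1 : 𝕂) - γ‖ = ‖(1 - γ) • φ x₀‖ := by rw [norm_smul]; ring
        _ ≤ L * I₀ + ‖F x₀‖ := hval
    have hγle : ‖(1 : 𝕂) - γ‖ ≤ 1 + ‖γ‖ := by
      calc ‖(1 : 𝕂) - γ‖ ≤ ‖(1 : 𝕂)‖ + ‖γ‖ := norm_sub_le _ _
        _ = 1 + ‖γ‖ := by rw [norm_one]
    have hc1 : (1 : ℝ) ≤ c := hc ▸ le_max_left _ _
    have hc0le : c₀ ≤ c := hc ▸ le_max_right _ _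
    have key1 : L * (I₀ + ‖(1 : 𝕂) - γ‖) ≤ c * LF := by
      calc L * (I₀ + ‖(1 : 𝕂) - γ‖) ≤ L * (I₀ + (1 + ‖γ‖)) :=
            mul_le_mul_of_nonneg_left (by linarith) hLnon
        _ ≤ ((1 - lam)⁻¹ * LF) * (I₀ + (1 + ‖γ‖)) :=
            mul_le_mul_of_nonneg_right hLle2 (by positivity)
        _ = c₀ * LF := by rw [hc₀, hI0def]; ring
        _ ≤ c * LF := mul_le_mul_of_nonneg_right hc0le hLFnon
    rw [div_mul_eq_mul_div, le_div_iff₀ hd]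
    have hF0 : ‖F x₀‖ ≤ c * ‖F x₀‖ := le_mul_of_one_le_left (norm_nonneg _) hc1
    nlinarith [hφx₀, key1, hF0, norm_nonneg (F x₀), hLnon, hd.le]
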